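/- Fix an integer K ≥ 2 and an integer n ≥ 4(K+2). Then ∑_{r=K+1}^{⌊n/2⌋} (√n/(√(2π)·√(n−r)·√r)) · (r/n)^{r(K−1)} · e^{−((K+1)/n)(n−K−1)(K−1)} ≤ c(n;K)·[((K+1)/n)^{K^2−1} + (n/2)·((K+2)/n)^{(K+2)(K−1)}], where c(n;K) = (e^{−(K^2−1)(1−(K+1)/n)}/√(2π(K+1)))·√(n/(n−K−1)). -/

import Mathlib

open Real

lemma core_mul_log (a x : ℝ) (ha : 0 < a) (ha4 : a ≤ 1/4) (hax : a ≤ x) (hx2 : x ≤ 1/2) :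
    x * Real.log x ≤ a * Real.log a := by
  have hhalf : (1/2 : ℝ) * Real.log (1/2) ≤ a * Real.log a := by
    have he4 : Real.exp 1 ≤ 4 := by
      have := Real.exp_one_lt_d9; linarith
    have hta : (4:ℝ) ≤ 1/a := by
      rw [le_div_iff₀ ha]; linarith
    have h := Real.log_div_self_antitoneOn (by simpa using he4)
      (by show Real.exp 1 ≤ 1/a; linarith) hta
    have h' : Real.log (1/a) / (1/a) ≤ Real.log 4 / 4 := h
    have h1 : Real.log (1/a) / (1/a) = -(a * Real.log a) := by
      rw [Real.log_div one_ne_zero (ne_of_gt ha), Real.log_one]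
      field_simp
      ring
    have h2 : Real.log 4 / 4 = -((1/2 : ℝ) * Real.log (1/2)) := by
      rw [Real.log_div one_ne_zero two_ne_zero, Real.log_one,
        show (4:ℝ) = 2^2 by norm_num, Real.log_pow]
      push_cast; ring
    rw [h1, h2] at h'
    linarith
  have hseg : x ∈ segment ℝ a (1/2 : ℝ) := by
    rw [segment_eq_Icc (by linarith : a ≤ (1/2:ℝ))]
    exact ⟨hax, hx2⟩
  have hmax := Real.convexOn_mul_log.le_on_segment (le_of_lt ha : a ∈ Set.Ici (0:ℝ))
    (by norm_num : (1/2:ℝ) ∈ Set.Ici (0:ℝ)) hseg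
  calc x * Real.log x ≤ max (a * Real.log a) ((1/2:ℝ) * Real.log (1/2)) := hmax
    _ ≤ a * Real.log a := max_le le_rfl hhalf

lemma pow_term_bound (K n r : ℕ) (hK : 2 ≤ K) (hn : 4 * (K + 2) ≤ n)
    (hr1 : K + 2 ≤ r) (hr2 : 2 * r ≤ n) :
    ((r : ℝ) / n) ^ (r * (K - 1)) ≤ (((K : ℝ) + 2) / n) ^ ((K + 2) * (K - 1)) := by
  have hn0 : (0:ℝ) < n := by
    have : 0 < n := by omega
    exact_mod_cast this
  have hr0 : (0:ℝ) < r := by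
    have : 0 < r := by omega
    exact_mod_cast this
  have hrcast : (K:ℝ) + 2 ≤ r := by exact_mod_cast hr1
  have hncast : 4 * ((K:ℝ) + 2) ≤ n := by exact_mod_cast hn
  have hr2cast : 2 * (r:ℝ) ≤ n := by exact_mod_cast hr2
  set a : ℝ := ((K:ℝ) + 2) / n with ha_def
  set x : ℝ := (r:ℝ) / n with hx_def
  have ha : 0 < a := by positivity
  have hx0 : 0 < x := by positivity
  have ha4 : a ≤ 1/4 := by
    rw [ha_def, div_le_iff₀ hn0]; linarith
  have hax : a ≤ x := by
    rw [ha_def, hx_def]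
    gcongr
  have hx2 : x ≤ 1/2 := by
    rw [hx_def, div_le_iff₀ hn0]; linarith
  have hcore := core_mul_log a x ha ha4 hax hx2
  have hrx : (r:ℝ) = n * x := by rw [hx_def]; field_simp
  have hka : (K:ℝ) + 2 = n * a := by rw [ha_def]; field_simp
  have key : (r:ℝ) * Real.log x ≤ ((K:ℝ) + 2) * Real.log a :=
    calc (r:ℝ) * Real.log x = n * (x * Real.log x) := by rw [hrx]; ring
      _ ≤ n * (a * Real.log a) := mul_le_mul_of_nonneg_left hcore hn0.le
      _ = ((K:ℝ) + 2) * Real.log a := by rw [hka]; ring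
  have hc : (0:ℝ) ≤ (K:ℝ) - 1 := by
    have : (2:ℝ) ≤ K := by exact_mod_cast hK
    linarith
  rw [← Real.rpow_natCast x, ← Real.rpow_natCast a, Real.rpow_def_of_pos hx0,
    Real.rpow_def_of_pos ha, Real.exp_le_exp]
  push_cast [Nat.cast_sub (show 1 ≤ K by omega)]
  nlinarith [mul_le_mul_of_nonneg_left key hc]

lemma pre_bound (K n r : ℕ) (hK : 2 ≤ K) (hn : 4 * (K + 2) ≤ n)
    (hr1 : K + 1 ≤ r) (hr2 : 2 * r ≤ n) :
    Real.sqrt n / (Real.sqrt (2 * π) * Real.sqrt ((n : ℝ) - r) * Real.sqrt r) ≤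
      1 / Real.sqrt (2 * π * ((K : ℝ) + 1)) * Real.sqrt ((n : ℝ) / ((n : ℝ) - K - 1)) := by
  have hπ := Real.pi_pos
  have hKc : (2:ℝ) ≤ K := by exact_mod_cast hK
  have hncast : 4 * ((K:ℝ) + 2) ≤ n := by exact_mod_cast hn
  have hrcast : (K:ℝ) + 1 ≤ r := by exact_mod_cast hr1
  have hr2cast : 2 * (r:ℝ) ≤ n := by exact_mod_cast hr2
  have hnK : (0:ℝ) < (n:ℝ) - K - 1 := by linarith
  have hRHS : 1 / Real.sqrt (2 * π * ((K : ℝ) + 1)) * Real.sqrt ((n : ℝ) / ((n : ℝ) - K - 1))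
      = Real.sqrt n / (Real.sqrt (2 * π) * Real.sqrt ((K:ℝ) + 1) * Real.sqrt ((n:ℝ) - K - 1)) := by
    rw [Real.sqrt_mul (by positivity : (0:ℝ) ≤ 2 * π), Real.sqrt_div (by positivity : (0:ℝ) ≤ (n:ℝ))]
    ring
  rw [hRHS]
  have hD : Real.sqrt (2 * π) * Real.sqrt ((K:ℝ) + 1) * Real.sqrt ((n:ℝ) - K - 1)
      ≤ Real.sqrt (2 * π) * Real.sqrt ((n:ℝ) - r) * Real.sqrt r := by
    rw [mul_assoc, mul_assoc]
    apply mul_le_mul_of_nonneg_left ?_ (Real.sqrt_nonneg _)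
    rw [← Real.sqrt_mul (by positivity : (0:ℝ) ≤ (K:ℝ) + 1),
      ← Real.sqrt_mul (by linarith : (0:ℝ) ≤ (n:ℝ) - r)]
    apply Real.sqrt_le_sqrt
    nlinarith [mul_nonneg (by linarith : (0:ℝ) ≤ (r:ℝ) - (K + 1))
      (by linarith : (0:ℝ) ≤ (n:ℝ) - (K + 1) - r)]
  have hDpos : 0 < Real.sqrt (2 * π) * Real.sqrt ((K:ℝ) + 1) * Real.sqrt ((n:ℝ) - K - 1) := by
    positivity
  exact div_le_div_of_nonneg_left (Real.sqrt_nonneg _) hDpos hD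

lemma sum_pow_bound (K n : ℕ) (hK : 2 ≤ K) (hn : 4 * (K + 2) ≤ n) :
    ∑ r ∈ Finset.Icc (K + 1) (n / 2), ((r:ℝ)/n) ^ (r * (K - 1)) ≤
      (((K:ℝ) + 1)/n) ^ (K^2 - 1) + ((n:ℝ)/2) * (((K:ℝ) + 2)/n) ^ ((K + 2) * (K - 1)) := by
  have hsplit : Finset.Icc (K + 1) (n / 2) = insert (K + 1) (Finset.Icc (K + 2) (n / 2)) := by
    ext x; simp only [Finset.mem_Icc, Finset.mem_insert]; omega
  rw [hsplit, Finset.sum_insert (by simp [Finset.mem_Icc])]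
  have hexp : (K + 1) * (K - 1) = K^2 - 1 := by
    obtain ⟨k, rfl⟩ : ∃ k, K = k + 2 := ⟨K - 2, by omega⟩
    have h0 : k + 2 - 1 = k + 1 := rfl
    rw [h0]
    have h1 : (k + 2 + 1) * (k + 1) = k*k + 4*k + 3 := by ring
    have h2 : (k + 2)^2 = k*k + 4*k + 4 := by ring
    omega
  apply add_le_add
  · apply le_of_eq
    rw [hexp]; push_cast; ring
  · calc ∑ r ∈ Finset.Icc (K + 2) (n / 2), ((r:ℝ)/n) ^ (r * (K - 1))
        ≤ (Finset.Icc (K + 2) (n / 2)).card • ((((K:ℝ) + 2)/n) ^ ((K + 2) * (K - 1))) := by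
          apply Finset.sum_le_card_nsmul
          intro r hr
          simp only [Finset.mem_Icc] at hr
          exact pow_term_bound K n r hK hn hr.1 (by omega)
      _ ≤ ((n:ℝ)/2) * (((K:ℝ) + 2)/n) ^ ((K + 2) * (K - 1)) := by
          rw [nsmul_eq_mul]
          apply mul_le_mul_of_nonneg_right ?_ (by positivity)
          have hcard : (Finset.Icc (K + 2) (n / 2)).card ≤ n / 2 := by
            rw [Nat.card_Icc]; omega
          calc ((Finset.Icc (K + 2) (n / 2)).card : ℝ) ≤ ((n / 2 : ℕ) : ℝ) := by
                exact_mod_cast hcard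
            _ ≤ (n:ℝ)/2 := Nat.cast_div_le

theorem final_sum_bound (K n : ℕ) (hK : 2 ≤ K) (hn : 4 * (K + 2) ≤ n) :
    ∑ r ∈ Finset.Icc (K + 1) (n / 2),
        (Real.sqrt n / (Real.sqrt (2 * π) * Real.sqrt ((n : ℝ) - r) * Real.sqrt r)) *
          ((r : ℝ) / n) ^ (r * (K - 1)) *
          Real.exp (-(((K : ℝ) + 1) / n) * ((n : ℝ) - K - 1) * ((K : ℝ) - 1)) ≤
      (Real.exp (-(((K : ℝ) ^ 2 - 1) * (1 - ((K : ℝ) + 1) / n))) /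
          Real.sqrt (2 * π * ((K : ℝ) + 1)) * Real.sqrt ((n : ℝ) / ((n : ℝ) - K - 1))) *
        ((((K : ℝ) + 1) / n) ^ (K ^ 2 - 1) +
          ((n : ℝ) / 2) * (((K : ℝ) + 2) / n) ^ ((K + 2) * (K - 1))) := by
  have hπ := Real.pi_pos
  have hn0 : (0:ℝ) < n := by
    have : 0 < n := by omega
    exact_mod_cast this
  have hKc : (2:ℝ) ≤ K := by exact_mod_cast hK
  have hncast : 4 * ((K:ℝ) + 2) ≤ n := by exact_mod_cast hn
  have hnK : (0:ℝ) < (n:ℝ) - K - 1 := by linarith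
  set E : ℝ := Real.exp (-(((K : ℝ) + 1) / n) * ((n : ℝ) - K - 1) * ((K : ℝ) - 1)) with hE_def
  set P : ℝ := 1 / Real.sqrt (2 * π * ((K : ℝ) + 1)) * Real.sqrt ((n : ℝ) / ((n : ℝ) - K - 1))
    with hP_def
  have hEeq : E = Real.exp (-(((K : ℝ) ^ 2 - 1) * (1 - ((K : ℝ) + 1) / n))) := by
    rw [hE_def]
    congr 1
    field_simp
    ring
  have hPpos : 0 ≤ P := by rw [hP_def]; positivity
  calc ∑ r ∈ Finset.Icc (K + 1) (n / 2),
        (Real.sqrt n / (Real.sqrt (2 * π) * Real.sqrt ((n : ℝ) - r) * Real.sqrt r)) *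
          ((r : ℝ) / n) ^ (r * (K - 1)) * E
      ≤ ∑ r ∈ Finset.Icc (K + 1) (n / 2), P * ((r : ℝ) / n) ^ (r * (K - 1)) * E := by
        apply Finset.sum_le_sum
        intro r hr
        simp only [Finset.mem_Icc] at hr
        apply mul_le_mul_of_nonneg_right ?_ (Real.exp_pos _).le
        apply mul_le_mul_of_nonneg_right ?_ (by positivity)
        exact pre_bound K n r hK hn hr.1 (by omega)
    _ = (P * E) * ∑ r ∈ Finset.Icc (K + 1) (n / 2), ((r : ℝ) / n) ^ (r * (K - 1)) := by
        rw [Finset.mul_sum]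
        exact Finset.sum_congr rfl fun r _ => by ring
    _ ≤ (P * E) * ((((K:ℝ) + 1)/n) ^ (K^2 - 1) +
          ((n:ℝ)/2) * (((K:ℝ) + 2)/n) ^ ((K + 2) * (K - 1))) := by
        apply mul_le_mul_of_nonneg_left (sum_pow_bound K n hK hn)
        exact mul_nonneg hPpos (Real.exp_pos _).le
    _ = _ := by rw [hEeq, hP_def]; ring
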